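/- Let F be a finite field with q = 2^n elements. Let ⋆ : F × F → F be additive in each argument such that for every nonzero c ∈ F both maps x ↦ x⋆c and x ↦ c⋆x are bijections of F. Let f : F → F be an additive bijection such that for every nonzero c ∈ F the set {x ∈ F : f(x) + x⋆c = 0} has exactly 2 elements. Define D := {(c, b) ∈ F × F : there exists x ∈ F with f(x) + x⋆c = b}. Then D is a (q², q²/2 + q/2, q²/4 + q/2)-difference set in the elementary abelian group (F × F, +); that is, D has exactly q²/2 + q/2 elements, and for every (γ, β) ∈ F × F with (γ, β) ≠ (0, 0), the number of ordered pairs (d₁, d₂) ∈ D × D with d₁ − d₂ = (γ, β) equals q²/4 + q/2. -/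

import Mathlib

open Finset

private lemma card_filter_eq_one_of_bij {α : Type*} [Fintype α] [DecidableEq α]
    (h : α → α) (hb : Function.Bijective h) (v : α) :
    (Finset.univ.filter fun c => h c = v).card = 1 := by
  obtain ⟨c₀, hc₀⟩ := hb.surjective v
  rw [Finset.card_eq_one]
  refine ⟨c₀, ?_⟩
  ext c
  simp only [Finset.mem_filter, Finset.mem_univ, true_and, Finset.mem_singleton]
  constructor
  · intro h1; exact hb.injective (h1.trans hc₀.symm)
  · rintro rfl; exact hc₀

private lemma fiber_card {A B : Type*} [AddCommGroup A] [AddCommGroup B] [Fintype A]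
    [DecidableEq B] (h : A → B) (hadd : ∀ x y, h (x + y) = h x + h y) (b : B)
    [Decidable (∃ x, h x = b)] :
    (Finset.univ.filter fun x => h x = b).card =
      if ∃ x, h x = b then (Finset.univ.filter fun x => h x = 0).card else 0 := by
  have hsub : ∀ x y : A, h (x - y) = h x - h y := by
    intro x y
    exact map_sub (AddMonoidHom.mk' h hadd) x y
  split_ifs with hex
  · obtain ⟨x₀, hx₀⟩ := hex
    refine Finset.card_nbij' (fun x => x - x₀) (fun x => x + x₀) ?_ ?_ ?_ ?_
    · intro a ha
      simp only [Finset.mem_coe, Finset.mem_filter, Finset.mem_univ, true_and] at ha ⊢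
      rw [hsub, ha, hx₀, sub_self]
    · intro a ha
      simp only [Finset.mem_coe, Finset.mem_filter, Finset.mem_univ, true_and] at ha ⊢
      rw [hadd, ha, hx₀, zero_add]
    · intro a _; simp only []; exact sub_add_cancel a x₀
    · intro a _; simp only []; exact add_sub_cancel_right a x₀
  · rw [Finset.card_eq_zero, Finset.filter_eq_empty_iff]
    push_neg at hex
    intro x _; exact hex x

private lemma card_filter_shift {A : Type*} [AddCommGroup A] [Fintype A]
    (p : A → Prop) [DecidablePred p] (β : A) :
    (Finset.univ.filter fun b => p (β + b)).card = (Finset.univ.filter p).card := by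
  refine Finset.card_nbij' (fun b => β + b) (fun b => -β + b) ?_ ?_ ?_ ?_
  · intro a ha; simp only [Finset.mem_coe, Finset.mem_filter, Finset.mem_univ, true_and] at ha ⊢; exact ha
  · intro a ha; simp only [Finset.mem_coe, Finset.mem_filter, Finset.mem_univ, true_and] at ha ⊢
    rwa [add_neg_cancel_left]
  · intro a _; exact neg_add_cancel_left β a
  · intro a _; exact add_neg_cancel_left β a

private lemma card_filter_prod {α β' : Type*} [Fintype α] [Fintype β']
    (p : α → Prop) (q : β' → Prop) [DecidablePred p] [DecidablePred q] :
    (Finset.univ.filter fun t : α × β' => p t.1 ∧ q t.2).card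
      = (Finset.univ.filter p).card * (Finset.univ.filter q).card := by
  rw [← Finset.univ_product_univ, Finset.filter_product, Finset.card_product]

/-- Theorem 5.3, difference set in `G₁ ≅ C₂^{2n}`: let `(F, +, ⋆)` be a presemifield of
order `q = 2^n` and `f` an additive bijection such that for every nonzero `c` the kernel
`{x : f(x) + x⋆c = 0}` has exactly `2` elements (a translation hyperoval of type (a)).
Then `D = {(c,b) : ∃ x, f(x) + x⋆c = b}` is a `(q², q²/2 + q/2, q²/4 + q/2)`-difference
set in the elementary abelian group `(F × F, +)`. -/
theorem hyperoval_difference_set_elementary_abelian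
    {F : Type*} [Field F] [Fintype F]
    (n q : ℕ) (hq : q = 2 ^ n) (hF : Fintype.card F = q)
    (star : F → F → F)
    (hstar_left : ∀ a b c : F, star (a + b) c = star a c + star b c)
    (hstar_right : ∀ a b c : F, star a (b + c) = star a b + star a c)
    (hstar_bij_right : ∀ c : F, c ≠ 0 → Function.Bijective (fun x : F => star x c))
    (hstar_bij_left : ∀ c : F, c ≠ 0 → Function.Bijective (fun x : F => star c x))
    (f : F → F)
    (hf_add : ∀ x y : F, f (x + y) = f x + f y)
    (hf_bij : Function.Bijective f)
    (hker : ∀ c : F, c ≠ 0 → ({x : F | f x + star x c = 0}).ncard = 2) :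
    ({p : F × F | ∃ x : F, f x + star x p.1 = p.2}).ncard = q ^ 2 / 2 + q / 2 ∧
    ∀ g : F × F, g ≠ (0, 0) →
      ({dd : (F × F) × (F × F) |
          dd.1 ∈ {p : F × F | ∃ x : F, f x + star x p.1 = p.2} ∧
          dd.2 ∈ {p : F × F | ∃ x : F, f x + star x p.1 = p.2} ∧
          dd.1 - dd.2 = g}).ncard = q ^ 2 / 4 + q / 2 := by
  classical
  -- basic bounds
  have hq2 : 2 ≤ q := hF ▸ Fintype.one_lt_card
  have hn : n ≠ 0 := by rintro rfl; simp [hq] at hq2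
  obtain ⟨m, hm⟩ : ∃ m, q = 2 * m := ⟨2 ^ (n - 1), by
    rw [hq, ← pow_succ']
    congr 1
    omega⟩
  have hm1 : 1 ≤ m := by omega
  -- characteristic 2
  have hchar : ringChar F = 2 := by
    obtain ⟨m', hp, hcard⟩ := FiniteField.card F (ringChar F)
    have hdvd : ringChar F ∣ 2 ^ n := by
      rw [← hq, ← hF, hcard]
      exact dvd_pow_self _ (Nat.pos_iff_ne_zero.mp m'.pos)
    exact (Nat.prime_dvd_prime_iff_eq hp Nat.prime_two).mp (hp.dvd_of_dvd_pow hdvd)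
  have h2' : (2 : F) = 0 := by
    haveI : CharP F 2 := hchar ▸ ringChar.charP F
    exact_mod_cast CharP.cast_eq_zero F 2
  have h2 : ∀ x : F, x + x = 0 := by
    intro x; rw [← two_mul, h2', zero_mul]
  have hneg : ∀ x : F, -x = x := fun x => neg_eq_of_add_eq_zero_left (h2 x)
  have heq0 : ∀ a b : F, a + b = 0 ↔ a = b := by
    intro a b
    constructor
    · intro h; rw [← hneg b]; exact eq_neg_of_add_eq_zero_left h
    · rintro rfl; exact h2 _
  -- zero laws
  have hstar0r : ∀ a : F, star a 0 = 0 := by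
    intro a
    have h := hstar_right a 0 0
    rw [add_zero] at h
    exact (left_eq_add.mp h)
  have hstar0l : ∀ a : F, star 0 a = 0 := by
    intro a
    have h := hstar_left 0 0 a
    rw [add_zero] at h
    exact (left_eq_add.mp h)
  have hf0 : f 0 = 0 := by
    have h := hf_add 0 0
    rw [add_zero] at h
    exact (left_eq_add.mp h)
  have hsurj0 : ∀ b : F, ∃ x : F, f x + star x 0 = b := by
    intro b
    obtain ⟨x, hx⟩ := hf_bij.surjective b
    exact ⟨x, by rw [hstar0r, add_zero, hx]⟩
  -- the kernel counting function
  set k : F → ℕ := fun c => (Finset.univ.filter fun x : F => f x + star x c = 0).card with hkdef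
  have hGE : ∀ (c : F) (x y : F),
      f (x + y) + star (x + y) c = (f x + star x c) + (f y + star y c) := by
    intro c x y
    rw [hf_add, hstar_left]; ring
  have hk0 : k 0 = 1 := by
    have h1 : (Finset.univ.filter fun x : F => f x + star x 0 = 0) = {0} := by
      ext x
      simp only [Finset.mem_filter, Finset.mem_univ, true_and, Finset.mem_singleton,
        hstar0r, add_zero]
      exact ⟨fun h => hf_bij.injective (h.trans hf0.symm), fun h => h ▸ hf0⟩
    simp [hkdef, h1]
  have hkc : ∀ c : F, c ≠ 0 → k c = 2 := by
    intro c hc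
    have h := hker c hc
    rw [Set.ncard_eq_toFinset_card', Set.toFinset_setOf] at h
    simp only [hkdef]
    rw [← h]
  -- fiber counts
  have hfiber : ∀ c b : F, (Finset.univ.filter fun x : F => f x + star x c = b).card =
      if ∃ x : F, f x + star x c = b then k c else 0 := by
    intro c b
    exact fiber_card (fun x => f x + star x c) (hGE c) b
  -- image counts
  set I : F → ℕ := fun c => (Finset.univ.filter fun b : F => ∃ x : F, f x + star x c = b).card
    with hIdef
  have hqI : ∀ c : F, q = k c * I c := by
    intro c
    have h1 : (Finset.univ : Finset F).card =
        ∑ b : F, (Finset.univ.filter fun x : F => f x + star x c = b).card :=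
      Finset.card_eq_sum_card_fiberwise (fun x _ => Finset.mem_univ _)
    calc q = (Finset.univ : Finset F).card := by rw [Finset.card_univ, hF]
    _ = ∑ b : F, (Finset.univ.filter fun x : F => f x + star x c = b).card := h1
    _ = ∑ b : F, if ∃ x : F, f x + star x c = b then k c else 0 := by
        exact Finset.sum_congr rfl fun b _ => hfiber c b
    _ = ∑ _b ∈ Finset.univ.filter fun b : F => ∃ x : F, f x + star x c = b, k c := by
        rw [Finset.sum_filter]
    _ = k c * I c := by rw [Finset.sum_const, smul_eq_mul, hIdef, mul_comm]
  have hI0 : I 0 = q := by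
    have := hqI 0
    rw [hk0, one_mul] at this
    exact this.symm
  have hIc : ∀ c : F, c ≠ 0 → I c = m := by
    intro c hc
    have := hqI c
    rw [hkc c hc, hm] at this
    omega
  have e1 : q ^ 2 / 4 = m * m := by
    have h4 : q ^ 2 = 4 * (m * m) := by rw [hm]; ring
    rw [h4]; exact Nat.mul_div_cancel_left _ (by norm_num)
  have e2 : q / 2 = m := by rw [hm]; exact Nat.mul_div_cancel_left _ (by norm_num)
  have e3 : q ^ 2 / 2 = 2 * (m * m) := by
    have h4 : q ^ 2 = 2 * (2 * (m * m)) := by rw [hm]; ring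
    rw [h4]; exact Nat.mul_div_cancel_left _ (by norm_num)
  constructor
  · -- Part 1
    rw [Set.ncard_eq_toFinset_card', Set.toFinset_setOf]
    have hsum : (Finset.univ.filter fun p : F × F => ∃ x : F, f x + star x p.1 = p.2).card
        = ∑ c : F, I c := by
      rw [Finset.card_filter, Fintype.sum_prod_type]
      exact Finset.sum_congr rfl fun c _ => (Finset.card_filter _ _).symm
    rw [hsum, ← Finset.add_sum_erase Finset.univ I (Finset.mem_univ (0 : F)), hI0]
    have hrest : ∑ c ∈ Finset.univ.erase (0 : F), I c = (q - 1) * m := by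
      rw [Finset.sum_congr rfl (fun c hc => hIc c (Finset.mem_erase.mp hc).1),
        Finset.sum_const, smul_eq_mul, Finset.card_erase_of_mem (Finset.mem_univ _),
        Finset.card_univ, hF]
    rw [hrest, e2, e3]
    have hA : m ≤ m * m := Nat.le_mul_of_pos_left m hm1
    rw [Nat.sub_mul, one_mul]
    have hmm : (2 * m) * m = 2 * (m * m) := by ring
    rw [hm, hmm]
    omega
  · -- Part 2
    rintro ⟨γ, β⟩ hgp
    have hne : ¬(γ = 0 ∧ β = 0) := by
      intro h
      exact hgp (by simp [Prod.ext_iff, h.1, h.2])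
    -- Step A: rewrite the set of pairs as an image
    have hsetA : {dd : (F × F) × (F × F) |
          dd.1 ∈ {p : F × F | ∃ x : F, f x + star x p.1 = p.2} ∧
          dd.2 ∈ {p : F × F | ∃ x : F, f x + star x p.1 = p.2} ∧
          dd.1 - dd.2 = ((γ, β) : F × F)} =
        (fun d : F × F => ((γ, β) + d, d)) ''
          {d : F × F | (∃ x : F, f x + star x d.1 = d.2) ∧
            (∃ y : F, f y + star y (γ + d.1) = β + d.2)} := by
      ext dd
      simp only [Set.mem_image, Set.mem_setOf_eq]
      constructor
      · rintro ⟨h1, h2, h3⟩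
        have hdd1 : dd.1 = (γ, β) + dd.2 := sub_eq_iff_eq_add.mp h3
        refine ⟨dd.2, ⟨h2, ?_⟩, ?_⟩
        · rw [hdd1] at h1
          simpa using h1
        · rw [← hdd1]
      · rintro ⟨d, ⟨h1, h2⟩, rfl⟩
        exact ⟨by simpa using h2, h1, add_sub_cancel_right _ _⟩
    have hinj : Function.Injective (fun d : F × F => (((γ, β) : F × F) + d, d)) :=
      fun a b hab => congrArg Prod.snd hab
    rw [hsetA, Set.ncard_image_of_injective _ hinj, Set.ncard_eq_toFinset_card',
      Set.toFinset_setOf]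
    -- the per-column counts
    set N : F → ℕ := fun c => (Finset.univ.filter fun b : F =>
        (∃ x : F, f x + star x c = b) ∧ (∃ y : F, f y + star y (γ + c) = β + b)).card
      with hNdef
    have hT : (Finset.univ.filter fun d : F × F =>
        (∃ x : F, f x + star x d.1 = d.2) ∧
        (∃ y : F, f y + star y (γ + d.1) = β + d.2)).card = ∑ c : F, N c := by
      rw [Finset.card_filter, Fintype.sum_prod_type]
      exact Finset.sum_congr rfl fun c _ => (Finset.card_filter _ _).symm
    rw [hT]
    -- hSN : the double-fiber count
    have hSN : ∀ c : F,
        (Finset.univ.filter fun t : F × F =>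
          f t.2 + star t.2 (γ + c) = β + (f t.1 + star t.1 c)).card
        = k c * k (γ + c) * N c := by
      intro c
      have h1 : (Finset.univ.filter fun t : F × F =>
            f t.2 + star t.2 (γ + c) = β + (f t.1 + star t.1 c)).card
          = ∑ b : F, ((Finset.univ.filter fun t : F × F =>
              f t.2 + star t.2 (γ + c) = β + (f t.1 + star t.1 c)).filter
              (fun t : F × F => f t.1 + star t.1 c = b)).card :=
        Finset.card_eq_sum_card_fiberwise (fun t _ => Finset.mem_univ _)
      rw [h1]
      have h2c : ∀ b : F, ((Finset.univ.filter fun t : F × F =>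
            f t.2 + star t.2 (γ + c) = β + (f t.1 + star t.1 c)).filter
            (fun t : F × F => f t.1 + star t.1 c = b)).card
          = (if ∃ x : F, f x + star x c = b then k c else 0) *
            (if ∃ y : F, f y + star y (γ + c) = β + b then k (γ + c) else 0) := by
        intro b
        rw [Finset.filter_filter]
        have hfe : (Finset.univ.filter fun t : F × F =>
              (f t.2 + star t.2 (γ + c) = β + (f t.1 + star t.1 c)) ∧
              (f t.1 + star t.1 c = b))
            = Finset.univ.filter fun t : F × F =>
              (f t.1 + star t.1 c = b) ∧ (f t.2 + star t.2 (γ + c) = β + b) := by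
          apply Finset.filter_congr
          intro t _
          constructor
          · rintro ⟨hA, hB⟩
            exact ⟨hB, by rw [hA, hB]⟩
          · rintro ⟨hA, hB⟩
            exact ⟨by rw [hA, hB], hA⟩
        rw [hfe]
        have hprod : (Finset.univ.filter fun t : F × F =>
              (f t.1 + star t.1 c = b) ∧ (f t.2 + star t.2 (γ + c) = β + b)).card
            = (Finset.univ.filter fun z : F => f z + star z c = b).card *
              (Finset.univ.filter fun y : F => f y + star y (γ + c) = β + b).card :=
          card_filter_prod (fun z : F => f z + star z c = b)
            (fun y : F => f y + star y (γ + c) = β + b)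
        rw [hprod, hfiber c b, hfiber (γ + c) (β + b)]
      rw [Finset.sum_congr rfl fun b _ => h2c b]
      have h3 : ∀ b : F, (if ∃ x : F, f x + star x c = b then k c else 0) *
            (if ∃ y : F, f y + star y (γ + c) = β + b then k (γ + c) else 0)
          = if (∃ x : F, f x + star x c = b) ∧ (∃ y : F, f y + star y (γ + c) = β + b)
              then k c * k (γ + c) else 0 := by
        intro b
        by_cases hA : ∃ x : F, f x + star x c = b
        · by_cases hB : ∃ y : F, f y + star y (γ + c) = β + b
          · rw [if_pos hA, if_pos hB, if_pos ⟨hA, hB⟩]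
          · rw [if_pos hA, if_neg hB,
              if_neg (fun h : (∃ x : F, f x + star x c = b) ∧
                (∃ y : F, f y + star y (γ + c) = β + b) => hB h.2), mul_zero]
        · rw [if_neg hA,
            if_neg (fun h : (∃ x : F, f x + star x c = b) ∧
              (∃ y : F, f y + star y (γ + c) = β + b) => hA h.1), zero_mul]
      rw [Finset.sum_congr rfl fun b _ => h3 b, ← Finset.sum_filter, Finset.sum_const,
        smul_eq_mul, hNdef]
      ring
    -- hOE : change of variables (x,y) -> (x+y,y)
    have hiff : ∀ c x y : F, (f y + star y (γ + c) = β + (f x + star x c)) ↔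
        (star (x + y) c = f (x + y) + (star y γ + β)) := by
      intro c x y
      rw [hstar_left, hf_add, hstar_right]
      constructor <;> intro h <;>
        linear_combination -h + (star y c - f x - β) * h2'
    have hOE : ∀ c : F,
        (Finset.univ.filter fun t : F × F =>
          f t.2 + star t.2 (γ + c) = β + (f t.1 + star t.1 c)).card
        = (Finset.univ.filter fun t : F × F =>
          star t.1 c = f t.1 + (star t.2 γ + β)).card := by
      intro c
      refine Finset.card_nbij' (fun t => (t.1 + t.2, t.2)) (fun t => (t.1 + t.2, t.2))
        ?_ ?_ ?_ ?_
      · intro t ht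
        simp only [Finset.mem_coe, Finset.mem_filter, Finset.mem_univ, true_and] at ht ⊢
        exact (hiff c t.1 t.2).mp ht
      · intro t ht
        simp only [Finset.mem_coe, Finset.mem_filter, Finset.mem_univ, true_and] at ht ⊢
        have := (hiff c (t.1 + t.2) t.2).mpr ?_
        · exact this
        · rw [add_assoc, h2 t.2, add_zero]
          exact ht
      · intro t _
        simp only []
        rw [add_assoc, h2 t.2, add_zero]
      · intro t _
        simp only []
        rw [add_assoc, h2 t.2, add_zero]
    -- the sum-swap computation
    set W : ℕ := (Finset.univ.filter fun y : F => star y γ + β = 0).card with hWdef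
    have hinner : ∀ t : F × F,
        (Finset.univ.filter fun c : F => star t.1 c = f t.1 + (star t.2 γ + β)).card
        = if t.1 = 0 then (if star t.2 γ + β = 0 then q else 0) else 1 := by
      intro t
      split_ifs with h0 hy
      · rw [Finset.filter_true_of_mem, Finset.card_univ, hF]
        intro c _
        rw [h0, hstar0l, hf0, zero_add]
        exact hy.symm
      · rw [Finset.filter_false_of_mem, Finset.card_empty]
        intro c _ hcontra
        rw [h0, hstar0l, hf0, zero_add] at hcontra
        exact hy hcontra.symm
      · exact card_filter_eq_one_of_bij _ (hstar_bij_left t.1 h0) _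
    have hmain : ∑ c : F, k c * k (γ + c) * N c = W * q + (q - 1) * q := by
      rw [← Finset.sum_congr rfl fun c (_ : c ∈ Finset.univ) => hSN c]
      rw [Finset.sum_congr rfl fun c (_ : c ∈ Finset.univ) => hOE c]
      have hswap : ∑ c : F, (Finset.univ.filter fun t : F × F =>
            star t.1 c = f t.1 + (star t.2 γ + β)).card
          = ∑ t : F × F, (Finset.univ.filter fun c : F =>
            star t.1 c = f t.1 + (star t.2 γ + β)).card := by
        simp only [Finset.card_filter]
        exact Finset.sum_comm
      rw [hswap, Finset.sum_congr rfl fun t (_ : t ∈ Finset.univ) => hinner t,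
        Fintype.sum_prod_type,
        ← Finset.add_sum_erase Finset.univ _ (Finset.mem_univ (0 : F))]
      have hfirst : ∑ y : F, (if (0 : F) = 0 then (if star y γ + β = 0 then q else 0) else 1)
          = W * q := by
        rw [Finset.sum_congr rfl fun y (_ : y ∈ Finset.univ) => if_pos rfl,
          ← Finset.sum_filter, Finset.sum_const, smul_eq_mul, hWdef]
      have hsecond : ∑ z ∈ Finset.univ.erase (0 : F),
            (∑ y : F, if z = 0 then (if star y γ + β = 0 then q else 0) else 1)
          = (q - 1) * q := by
        have hz1 : ∀ z ∈ Finset.univ.erase (0 : F),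
            (∑ y : F, if z = 0 then (if star y γ + β = 0 then q else 0) else 1) = q := by
          intro z hz
          rw [Finset.sum_congr rfl fun y (_ : y ∈ Finset.univ) =>
            if_neg (Finset.mem_erase.mp hz).1, Finset.sum_const, Finset.card_univ, hF,
            smul_eq_mul, mul_one]
        rw [Finset.sum_congr rfl hz1, Finset.sum_const,
          Finset.card_erase_of_mem (Finset.mem_univ _), Finset.card_univ, hF, smul_eq_mul]
      rw [hfirst, hsecond]
    -- now case on γ
    have hqq : q * q = 4 * (m * m) := by rw [hm]; ring
    by_cases hγ : γ = 0
    · -- γ = 0, β ≠ 0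
      subst hγ
      have hβ : β ≠ 0 := fun h => hne ⟨rfl, h⟩
      have hW0 : W = 0 := by
        rw [hWdef, Finset.card_eq_zero, Finset.filter_eq_empty_iff]
        intro y _
        rw [hstar0r, zero_add]
        exact hβ
      have hN0 : N 0 = q := by
        rw [hNdef]
        simp only [add_zero, zero_add]
        rw [Finset.filter_true_of_mem, Finset.card_univ, hF]
        intro b _
        exact ⟨hsurj0 b, hsurj0 (β + b)⟩
      rw [← Finset.add_sum_erase Finset.univ _ (Finset.mem_univ (0 : F))] at hmain ⊢
      have hrest : ∑ c ∈ Finset.univ.erase (0 : F), k c * k (0 + c) * N c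
          = 4 * ∑ c ∈ Finset.univ.erase (0 : F), N c := by
        rw [Finset.mul_sum]
        refine Finset.sum_congr rfl fun c hc => ?_
        have hc0 : c ≠ 0 := (Finset.mem_erase.mp hc).1
        rw [zero_add, hkc c hc0]
      rw [hrest, hk0, zero_add, hk0, hN0] at hmain
      rw [hW0, Nat.sub_mul, one_mul, hqq] at hmain
      rw [e1, e2, hN0]
      set A := m * m with hA
      omega
    · -- γ ≠ 0
      have hγmem : γ ∈ Finset.univ.erase (0 : F) :=
        Finset.mem_erase.mpr ⟨hγ, Finset.mem_univ _⟩
      have hN0 : N 0 = m := by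
        rw [hNdef]
        simp only [add_zero]
        have hcongr : (Finset.univ.filter fun b : F =>
              (∃ x : F, f x + star x 0 = b) ∧ (∃ y : F, f y + star y γ = β + b))
            = Finset.univ.filter fun b : F => (∃ y : F, f y + star y γ = β + b) := by
          apply Finset.filter_congr
          intro b _
          exact and_iff_right (hsurj0 b)
        rw [hcongr, card_filter_shift (fun v => ∃ y : F, f y + star y γ = v) β]
        exact hIc γ hγ
      have hNγ : N γ = m := by
        rw [hNdef]
        simp only [h2 γ]
        have hcongr : (Finset.univ.filter fun b : F =>
              (∃ x : F, f x + star x γ = b) ∧ (∃ y : F, f y + star y 0 = β + b))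
            = Finset.univ.filter fun b : F => (∃ x : F, f x + star x γ = b) := by
          apply Finset.filter_congr
          intro b _
          exact and_iff_left (hsurj0 (β + b))
        rw [hcongr]
        exact hIc γ hγ
      have hW1 : W = 1 := by
        rw [hWdef]
        have hcongr : (Finset.univ.filter fun y : F => star y γ + β = 0)
            = Finset.univ.filter fun y : F => star y γ = β := by
          apply Finset.filter_congr
          intro y _
          exact heq0 _ _
        rw [hcongr]
        exact card_filter_eq_one_of_bij _ (hstar_bij_right γ hγ) β
      rw [← Finset.add_sum_erase Finset.univ _ (Finset.mem_univ (0 : F)),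
        ← Finset.add_sum_erase _ _ hγmem] at hmain ⊢
      have hrest : ∑ c ∈ (Finset.univ.erase (0 : F)).erase γ, k c * k (γ + c) * N c
          = 4 * ∑ c ∈ (Finset.univ.erase (0 : F)).erase γ, N c := by
        rw [Finset.mul_sum]
        refine Finset.sum_congr rfl fun c hc => ?_
        obtain ⟨hcγ, hc'⟩ := Finset.mem_erase.mp hc
        have hc0 : c ≠ 0 := (Finset.mem_erase.mp hc').1
        have hγc : γ + c ≠ 0 := fun h => hcγ ((heq0 γ c).mp h).symm
        rw [hkc c hc0, hkc _ hγc]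
      rw [hrest, add_zero, h2 γ, hk0, hkc γ hγ, hN0, hNγ] at hmain
      rw [hW1, one_mul, Nat.sub_mul, one_mul, hqq] at hmain
      rw [e1, e2, hN0, hNγ]
      set A := m * m with hA
      omega
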